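/- The following are equivalent: (1) for every nonempty subset J ⊆ {0,…,s}, the polynomial F_J = Σ_{t∈J} f_t(U,V)·Z_t has no critical point all of whose coordinates (the U, V coordinates and the Z_t coordinates for t ∈ J) are nonzero; (2) for every t ∈ {0,…,s} the one-variable polynomial f_t(X,1) ∈ ℂ[X] has no repeated root, and for all t ≠ t′ in {0,…,s} the polynomials f_t(X,1) and f_{t′}(X,1) have no common root. (This identifies the discriminant locus cut out of the FI parameter space: the tuple (f_0,…,f_s) is generic exactly when no f_t has a repeated root and no two of the f_t share a root.) -/

import Mathlib

open MvPolynomial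

/-- `F_J = Σ_{t∈J} f_t(U,V)·Z_t`, a polynomial in the variables `U, V` (the inl
coordinates) and `Z_t` for `t ∈ {0,…,s}` (the inr coordinates); only the `Z_t` with
`t ∈ J` actually occur. -/
noncomputable def FJ (s : ℕ) (f : Fin (s + 1) → MvPolynomial (Fin 2) ℂ)
    (J : Finset (Fin (s + 1))) : MvPolynomial (Fin 2 ⊕ Fin (s + 1)) ℂ :=
  ∑ t ∈ J, (MvPolynomial.rename Sum.inl (f t)) * MvPolynomial.X (Sum.inr t)

/-- The one-variable polynomial `f_t(X, 1) ∈ ℂ[X]`. -/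
noncomputable def dehom (f : MvPolynomial (Fin 2) ℂ) : Polynomial ℂ :=
  MvPolynomial.aeval ![Polynomial.X, 1] f

lemma dehom_eval (f : MvPolynomial (Fin 2) ℂ) (a : ℂ) :
    (dehom f).eval a = MvPolynomial.eval ![a, 1] f := by
  unfold dehom
  induction f using MvPolynomial.induction_on with
  | C c => simp
  | add p q hp hq => simp [hp, hq]
  | mul_X p i hp => fin_cases i <;> simp [hp]

lemma dehom_pderiv_zero (f : MvPolynomial (Fin 2) ℂ) :
    dehom (MvPolynomial.pderiv 0 f) = Polynomial.derivative (dehom f) := by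
  unfold dehom
  induction f using MvPolynomial.induction_on with
  | C c => simp
  | add p q hp hq => simp [hp, hq]
  | mul_X p i hp => rw [pderiv_mul]; fin_cases i <;> simp [hp]

lemma eval_homog {f : MvPolynomial (Fin 2) ℂ} {n : ℕ} (hf : f.IsHomogeneous n)
    (c : ℂ) (x : Fin 2 → ℂ) :
    MvPolynomial.eval (fun i => c * x i) f = c ^ n * MvPolynomial.eval x f := by
  rw [MvPolynomial.eval_eq', MvPolynomial.eval_eq', Finset.mul_sum]
  refine Finset.sum_congr rfl fun m hm => ?_
  have hdeg : m 0 + m 1 = n := by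
    have h := hf (MvPolynomial.mem_support_iff.mp hm)
    rw [show (1 : Fin 2 → ℕ) = fun _ => 1 from rfl, ← Finsupp.degree_eq_weight_one] at h
    rw [← h, Finsupp.degree_apply, Finset.sum_subset m.support.subset_univ
      (fun i _ hi => Finsupp.notMem_support_iff.mp hi)]
    exact Fin.sum_univ_two m
  rw [Fin.prod_univ_two, Fin.prod_univ_two, ← hdeg, pow_add]
  ring

lemma euler_monomial (m : Fin 2 →₀ ℕ) (c : ℂ) :
    ∑ i : Fin 2, MvPolynomial.X i * MvPolynomial.pderiv i (MvPolynomial.monomial m c)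
      = ((m 0 + m 1 : ℕ) : MvPolynomial (Fin 2) ℂ) * MvPolynomial.monomial m c := by
  have key : ∀ i : Fin 2, MvPolynomial.X i * MvPolynomial.pderiv i (MvPolynomial.monomial m c)
      = ((m i : ℕ) : MvPolynomial (Fin 2) ℂ) * MvPolynomial.monomial m c := by
    intro i
    rw [pderiv_monomial]
    by_cases h : m i = 0
    · simp [h]
    · rw [X, monomial_mul, one_mul]
      have hm : Finsupp.single i 1 + (m - Finsupp.single i 1) = m := by
        ext j
        by_cases hj : j = i
        · subst hj
          simp only [Finsupp.add_apply, Finsupp.single_eq_same, Finsupp.tsub_apply]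
          omega
        · simp [Finsupp.single_eq_of_ne' (Ne.symm hj), Finsupp.tsub_apply]
      rw [hm, ← C_eq_coe_nat, C_mul_monomial, mul_comm]
  rw [Finset.sum_congr rfl fun i _ => key i, Fin.sum_univ_two, Nat.cast_add]
  ring

lemma euler {f : MvPolynomial (Fin 2) ℂ} {n : ℕ} (hf : f.IsHomogeneous n) :
    ∑ i : Fin 2, MvPolynomial.X i * MvPolynomial.pderiv i f
      = (n : MvPolynomial (Fin 2) ℂ) * f := by
  conv_lhs => rw [f.as_sum]
  conv_rhs => rw [f.as_sum]
  rw [Finset.mul_sum]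
  have hs : ∀ i : Fin 2, MvPolynomial.X i * MvPolynomial.pderiv i (∑ m ∈ f.support,
      MvPolynomial.monomial m (MvPolynomial.coeff m f)) = ∑ m ∈ f.support,
      MvPolynomial.X i * MvPolynomial.pderiv i
        (MvPolynomial.monomial m (MvPolynomial.coeff m f)) := by
    intro i; rw [map_sum, Finset.mul_sum]
  rw [Finset.sum_congr rfl fun i _ => hs i, Finset.sum_comm]
  refine Finset.sum_congr rfl fun m hm => ?_
  rw [euler_monomial]
  congr 2
  have h := hf (MvPolynomial.mem_support_iff.mp hm)
  rw [show (1 : Fin 2 → ℕ) = fun _ => 1 from rfl, ← Finsupp.degree_eq_weight_one] at h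
  rw [← h, Finsupp.degree_apply, Finset.sum_subset m.support.subset_univ
    (fun i _ hi => Finsupp.notMem_support_iff.mp hi)]
  exact Fin.sum_univ_two m

lemma pderiv_homog {f : MvPolynomial (Fin 2) ℂ} {n : ℕ} (hf : f.IsHomogeneous n) (i : Fin 2) :
    (MvPolynomial.pderiv i f).IsHomogeneous (n - 1) := by
  conv => enter [1]; rw [f.as_sum]
  rw [map_sum]
  apply MvPolynomial.IsHomogeneous.sum
  intro m hm
  rw [pderiv_monomial]
  by_cases h : m i = 0
  · rw [h]; simp only [Nat.cast_zero, mul_zero, monomial_zero]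
    exact isHomogeneous_zero _ _ _
  · apply isHomogeneous_monomial
    have hdeg : m 0 + m 1 = n := by
      have h := hf (MvPolynomial.mem_support_iff.mp hm)
      rw [show (1 : Fin 2 → ℕ) = fun _ => 1 from rfl, ← Finsupp.degree_eq_weight_one] at h
      rw [← h, Finsupp.degree_apply, Finset.sum_subset m.support.subset_univ
        (fun i _ hi => Finsupp.notMem_support_iff.mp hi)]
      exact Fin.sum_univ_two m
    rw [Finsupp.degree_apply, Finset.sum_subset (m - Finsupp.single i 1).support.subset_univ
      (fun j _ hj => Finsupp.notMem_support_iff.mp hj), Fin.sum_univ_two,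
      Finsupp.tsub_apply, Finsupp.tsub_apply]
    fin_cases i <;> simp_all <;> omega

lemma eval_eq_dehom {f : MvPolynomial (Fin 2) ℂ} {n : ℕ} (hf : f.IsHomogeneous n)
    {y : Fin 2 → ℂ} (hv : y 1 ≠ 0) :
    MvPolynomial.eval y f = y 1 ^ n * (dehom f).eval (y 0 / y 1) := by
  rw [dehom_eval]
  rw [← eval_homog hf (y 1) ![y 0 / y 1, 1]]
  have hy : y = fun i => y 1 * ![y 0 / y 1, 1] i := by
    funext i
    fin_cases i
    · show y 0 = y 1 * (y 0 / y 1); field_simp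
    · show y 1 = y 1 * 1; ring
  rw [← hy]

lemma dehom_eval_zero {f : MvPolynomial (Fin 2) ℂ} {n : ℕ} (hf : f.IsHomogeneous n) :
    (dehom f).eval 0 = MvPolynomial.coeff (Finsupp.single 1 n) f := by
  rw [dehom_eval, MvPolynomial.eval_eq']
  rw [Finset.sum_eq_single (Finsupp.single 1 n)]
  · rw [Fin.prod_univ_two]
    simp [Finsupp.single_eq_of_ne' (by decide : (1 : Fin 2) ≠ 0)]
  · intro m hm hne
    have hdeg : m 0 + m 1 = n := by
      have h := hf (MvPolynomial.mem_support_iff.mp hm)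
      rw [show (1 : Fin 2 → ℕ) = fun _ => 1 from rfl, ← Finsupp.degree_eq_weight_one] at h
      rw [← h, Finsupp.degree_apply, Finset.sum_subset m.support.subset_univ
        (fun i _ hi => Finsupp.notMem_support_iff.mp hi)]
      exact Fin.sum_univ_two m
    by_cases h0 : m 0 = 0
    · exfalso
      apply hne
      ext j
      fin_cases j
      · simpa [Finsupp.single_eq_of_ne' (by decide : (1 : Fin 2) ≠ 0)] using h0
      · show m 1 = Finsupp.single 1 n 1
        simp only [Finsupp.single_eq_same]
        omega
    · rw [Fin.prod_univ_two]
      show MvPolynomial.coeff m f * ((![(0:ℂ), 1] 0) ^ m 0 * (![(0:ℂ), 1] 1) ^ m 1) = 0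
      simp [zero_pow h0]
  · intro h
    rw [MvPolynomial.notMem_support_iff.mp h, zero_mul]

lemma double_root_iff {g : Polynomial ℂ} (hg : g ≠ 0) (z : ℂ) :
    2 ≤ Polynomial.rootMultiplicity z g ↔
      g.IsRoot z ∧ (Polynomial.derivative g).IsRoot z := by
  constructor
  · intro h
    have hroot : g.IsRoot z := (Polynomial.rootMultiplicity_pos hg).mp (by omega)
    refine ⟨hroot, ?_⟩
    have hd := Polynomial.derivative_rootMultiplicity_of_root hroot
    have hne : Polynomial.derivative g ≠ 0 := by
      intro h0
      rw [h0, Polynomial.rootMultiplicity_zero] at hd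
      omega
    exact (Polynomial.rootMultiplicity_pos hne).mp (by omega)
  · rintro ⟨h0, h1⟩
    have hd : Polynomial.derivative g ≠ 0 := by
      intro h
      have hC := Polynomial.eq_C_of_natDegree_eq_zero
        (Polynomial.natDegree_eq_zero_of_derivative_eq_zero h)
      rw [hC] at h0 hg
      simp [Polynomial.IsRoot] at h0
      exact hg (by rw [h0]; simp)
    have e1 := Polynomial.derivative_rootMultiplicity_of_root h0
    have e2 := (Polynomial.rootMultiplicity_pos hd).mpr h1
    have e3 := (Polynomial.rootMultiplicity_pos hg).mpr h0
    omega

lemma pderiv_inr_rename {s : ℕ} (t : Fin (s + 1)) (p : MvPolynomial (Fin 2) ℂ) :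
    MvPolynomial.pderiv (Sum.inr t)
      (MvPolynomial.rename (Sum.inl : Fin 2 → Fin 2 ⊕ Fin (s + 1)) p) = 0 := by
  apply pderiv_eq_zero_of_notMem_vars
  intro h
  obtain ⟨i, -, hi⟩ := Finset.mem_image.mp (MvPolynomial.vars_rename _ _ h)
  exact nomatch hi

lemma pderiv_FJ_inr {s : ℕ} (f : Fin (s + 1) → MvPolynomial (Fin 2) ℂ)
    (J : Finset (Fin (s + 1))) {t : Fin (s + 1)} (ht : t ∈ J) :
    MvPolynomial.pderiv (Sum.inr t) (FJ s f J) = MvPolynomial.rename Sum.inl (f t) := by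
  unfold FJ
  rw [map_sum]
  have hterm : ∀ τ : Fin (s + 1),
      MvPolynomial.pderiv (Sum.inr t)
        (MvPolynomial.rename Sum.inl (f τ) * MvPolynomial.X (Sum.inr τ))
      = if τ = t then MvPolynomial.rename Sum.inl (f τ) else 0 := by
    intro τ
    rw [pderiv_mul, pderiv_inr_rename, zero_mul, zero_add]
    by_cases h : τ = t
    · subst h; rw [pderiv_X_self, mul_one, if_pos rfl]
    · rw [pderiv_X_of_ne (fun hc => h (Sum.inr_injective hc)), mul_zero, if_neg h]
  rw [Finset.sum_congr rfl fun τ _ => hterm τ, Finset.sum_ite_eq' J t, if_pos ht]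

lemma pderiv_FJ_inl {s : ℕ} (f : Fin (s + 1) → MvPolynomial (Fin 2) ℂ)
    (J : Finset (Fin (s + 1))) (w : Fin 2) :
    MvPolynomial.pderiv (Sum.inl w) (FJ s f J)
      = ∑ τ ∈ J, MvPolynomial.rename Sum.inl (MvPolynomial.pderiv w (f τ))
          * MvPolynomial.X (Sum.inr τ) := by
  unfold FJ
  rw [map_sum]
  refine Finset.sum_congr rfl fun τ _ => ?_
  rw [pderiv_mul, pderiv_X_of_ne (fun hc => nomatch (hc : Sum.inr τ = Sum.inl w)), mul_zero, add_zero,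
    pderiv_rename Sum.inl_injective]

lemma comp_inl_eq {s : ℕ} (x : Fin 2 ⊕ Fin (s + 1) → ℂ) :
    x ∘ Sum.inl = ![x (Sum.inl 0), x (Sum.inl 1)] := by
  funext i
  fin_cases i <;> rfl

lemma eval_pderiv_zero (f : MvPolynomial (Fin 2) ℂ) (z : ℂ) :
    MvPolynomial.eval ![z, 1] (MvPolynomial.pderiv 0 f)
      = (Polynomial.derivative (dehom f)).eval z := by
  rw [← dehom_pderiv_zero, dehom_eval]

lemma eval_pderiv_one {f : MvPolynomial (Fin 2) ℂ} {n : ℕ} (hf : f.IsHomogeneous n) (z : ℂ) :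
    MvPolynomial.eval ![z, 1] (MvPolynomial.pderiv 1 f)
      = n * (dehom f).eval z - z * (Polynomial.derivative (dehom f)).eval z := by
  have h := congrArg (MvPolynomial.eval ![z, 1]) (euler hf)
  rw [Fin.sum_univ_two] at h
  simp only [map_add, map_mul, MvPolynomial.eval_X, map_natCast, Matrix.cons_val_zero,
    Matrix.cons_val_one, Matrix.head_cons] at h
  rw [dehom_eval, ← eval_pderiv_zero]
  linear_combination h

lemma eval_pderiv_FJ_inl {s : ℕ} (f : Fin (s + 1) → MvPolynomial (Fin 2) ℂ)
    (J : Finset (Fin (s + 1))) (w : Fin 2) (x : Fin 2 ⊕ Fin (s + 1) → ℂ) :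
    MvPolynomial.eval x (MvPolynomial.pderiv (Sum.inl w) (FJ s f J))
      = ∑ τ ∈ J, MvPolynomial.eval (x ∘ Sum.inl) (MvPolynomial.pderiv w (f τ))
          * x (Sum.inr τ) := by
  rw [pderiv_FJ_inl, map_sum]
  refine Finset.sum_congr rfl fun τ _ => ?_
  rw [map_mul, MvPolynomial.eval_rename, MvPolynomial.eval_X]

lemma eval_pderiv_FJ_inr {s : ℕ} (f : Fin (s + 1) → MvPolynomial (Fin 2) ℂ)
    (J : Finset (Fin (s + 1))) {t : Fin (s + 1)} (ht : t ∈ J)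
    (x : Fin 2 ⊕ Fin (s + 1) → ℂ) :
    MvPolynomial.eval x (MvPolynomial.pderiv (Sum.inr t) (FJ s f J))
      = MvPolynomial.eval (x ∘ Sum.inl) (f t) := by
  rw [pderiv_FJ_inr f J ht, MvPolynomial.eval_rename]

theorem stmt15 (s : ℕ) (N : Fin (s + 1) → ℕ) (hN : ∀ t, 1 ≤ N t)
    (f : Fin (s + 1) → MvPolynomial (Fin 2) ℂ)
    (hhom : ∀ t, (f t).IsHomogeneous (N t))
    (hU : ∀ t, MvPolynomial.coeff (Finsupp.single 0 (N t)) (f t) ≠ 0)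
    (hV : ∀ t, MvPolynomial.coeff (Finsupp.single 1 (N t)) (f t) ≠ 0) :
    (∀ J : Finset (Fin (s + 1)), J.Nonempty →
        ¬∃ x : Fin 2 ⊕ Fin (s + 1) → ℂ,
          (x (Sum.inl 0) ≠ 0 ∧ x (Sum.inl 1) ≠ 0 ∧ ∀ t ∈ J, x (Sum.inr t) ≠ 0) ∧
          (∀ w : Fin 2, MvPolynomial.eval x (MvPolynomial.pderiv (Sum.inl w) (FJ s f J)) = 0) ∧
          (∀ t ∈ J, MvPolynomial.eval x (MvPolynomial.pderiv (Sum.inr t) (FJ s f J)) = 0)) ↔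
      ((∀ t, ∀ z : ℂ, Polynomial.rootMultiplicity z (dehom (f t)) ≤ 1) ∧
        (∀ t t' : Fin (s + 1), t ≠ t' → ∀ z : ℂ,
          ¬((dehom (f t)).IsRoot z ∧ (dehom (f t')).IsRoot z))) := by
  have hgne : ∀ t, dehom (f t) ≠ 0 := fun t h0 =>
    hV t (by rw [← dehom_eval_zero (hhom t), h0, Polynomial.eval_zero])
  have hz_of_root : ∀ t (z : ℂ), (dehom (f t)).IsRoot z → z ≠ 0 := by
    intro t z hr h0
    subst h0
    exact hV t (by rw [← dehom_eval_zero (hhom t)]; exact hr)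
  constructor
  · intro h1
    have noDouble : ∀ t (z : ℂ),
        ¬((dehom (f t)).IsRoot z ∧ (Polynomial.derivative (dehom (f t))).IsRoot z) := by
      rintro t z ⟨hr, hrd⟩
      have hz := hz_of_root t z hr
      have hr0 : Polynomial.eval z (dehom (f t)) = 0 := hr
      have hrd0 : Polynomial.eval z (Polynomial.derivative (dehom (f t))) = 0 := hrd
      apply h1 {t} ⟨t, Finset.mem_singleton_self t⟩
      refine ⟨Sum.elim ![z, 1] (fun _ => 1), ⟨?_, ?_, ?_⟩, ?_, ?_⟩
      · simpa using hz
      · simp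
      · intro τ _; simp
      · intro w
        rw [eval_pderiv_FJ_inl, Finset.sum_singleton, Sum.elim_comp_inl]
        simp only [Sum.elim_inr, mul_one]
        fin_cases w <;> simp only [Fin.zero_eta, Fin.mk_one, Fin.isValue]
        · rw [eval_pderiv_zero]; exact hrd0
        · rw [eval_pderiv_one (hhom t), hr0, hrd0]; ring
      · intro τ hτ
        rw [Finset.mem_singleton] at hτ
        subst hτ
        rw [eval_pderiv_FJ_inr f _ (Finset.mem_singleton_self τ), Sum.elim_comp_inl,
          ← dehom_eval]
        exact hr0
    have noCommon : ∀ t t' : Fin (s + 1), t ≠ t' → ∀ z : ℂ,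
        ¬((dehom (f t)).IsRoot z ∧ (dehom (f t')).IsRoot z) := by
      rintro t t' hne z ⟨hr, hr'⟩
      have hz := hz_of_root t z hr
      have hr0 : Polynomial.eval z (dehom (f t)) = 0 := hr
      have hr0' : Polynomial.eval z (dehom (f t')) = 0 := hr'
      have hd : Polynomial.eval z (Polynomial.derivative (dehom (f t))) ≠ 0 :=
        fun h => noDouble t z ⟨hr, h⟩
      have hd' : Polynomial.eval z (Polynomial.derivative (dehom (f t'))) ≠ 0 :=
        fun h => noDouble t' z ⟨hr', h⟩
      apply h1 {t, t'} ⟨t, Finset.mem_insert_self _ _⟩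
      refine ⟨Sum.elim ![z, 1] (fun τ => if τ = t
          then Polynomial.eval z (Polynomial.derivative (dehom (f t')))
          else if τ = t' then -(Polynomial.eval z (Polynomial.derivative (dehom (f t))))
          else 1), ⟨?_, ?_, ?_⟩, ?_, ?_⟩
      · simpa using hz
      · simp
      · intro τ hτ
        rcases Finset.mem_insert.mp hτ with h | h
        · subst h
          simpa using hd'
        · rw [Finset.mem_singleton] at h
          subst h
          simp only [Sum.elim_inr, if_neg (Ne.symm hne), if_pos rfl]
          exact neg_ne_zero.mpr hd
      · intro w
        rw [eval_pderiv_FJ_inl, Sum.elim_comp_inl, Finset.sum_pair hne]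
        simp only [Sum.elim_inr, if_pos rfl, if_neg (Ne.symm hne)]
        fin_cases w <;>
          simp only [Fin.zero_eta, Fin.mk_one, Fin.isValue, if_true, if_neg hne]
        · rw [eval_pderiv_zero, eval_pderiv_zero]; ring
        · rw [eval_pderiv_one (hhom t), eval_pderiv_one (hhom t'), hr0, hr0']; ring
      · intro τ hτ
        rw [eval_pderiv_FJ_inr f _ hτ, Sum.elim_comp_inl, ← dehom_eval]
        rcases Finset.mem_insert.mp hτ with h | h
        · subst h; exact hr0
        · rw [Finset.mem_singleton] at h
          subst h; exact hr0'
    refine ⟨fun t z => ?_, noCommon⟩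
    by_contra hle
    push_neg at hle
    exact noDouble t z ((double_root_iff (hgne t) z).mp (by omega))
  · rintro ⟨hmult, hcommon⟩ J hJ ⟨x, ⟨hu, hv, hz⟩, hw, hti⟩
    have hv2 : (![x (Sum.inl 0), x (Sum.inl 1)] : Fin 2 → ℂ) 1 ≠ 0 := by simpa using hv
    have hroots : ∀ t ∈ J,
        (dehom (f t)).IsRoot (x (Sum.inl 0) / x (Sum.inl 1)) := by
      intro t ht
      have h := hti t ht
      rw [eval_pderiv_FJ_inr f J ht, comp_inl_eq, eval_eq_dehom (hhom t) hv2] at h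
      simp only [Matrix.cons_val_zero, Matrix.cons_val_one, Matrix.head_cons] at h
      exact (mul_eq_zero.mp h).resolve_left (pow_ne_zero _ hv)
    by_cases h2 : ∃ t ∈ J, ∃ t' ∈ J, t ≠ t'
    · obtain ⟨t, ht, t', ht', hne⟩ := h2
      exact hcommon t t' hne _ ⟨hroots t ht, hroots t' ht'⟩
    · push_neg at h2
      obtain ⟨t0, ht0⟩ := hJ
      have hJt0 : J = {t0} :=
        Finset.eq_singleton_iff_unique_mem.mpr ⟨ht0, fun t ht => h2 t ht t0 ht0⟩
      have hderiv : (Polynomial.derivative (dehom (f t0))).IsRoot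
          (x (Sum.inl 0) / x (Sum.inl 1)) := by
        have h := hw 0
        rw [eval_pderiv_FJ_inl, hJt0, Finset.sum_singleton, comp_inl_eq,
          eval_eq_dehom (pderiv_homog (hhom t0) 0) hv2, dehom_pderiv_zero] at h
        simp only [Matrix.cons_val_zero, Matrix.cons_val_one, Matrix.head_cons] at h
        have hzt : x (Sum.inr t0) ≠ 0 := hz t0 ht0
        rcases mul_eq_zero.mp h with h' | h'
        · exact (mul_eq_zero.mp h').resolve_left (pow_ne_zero _ hv)
        · exact absurd h' hzt
      have hge := (double_root_iff (hgne t0) (x (Sum.inl 0) / x (Sum.inl 1))).mpr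
        ⟨hroots t0 ht0, hderiv⟩
      have := hmult t0 (x (Sum.inl 0) / x (Sum.inl 1))
      omega
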